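/- Let p be a prime, K a field of characteristic p, and α, β ∈ K nonzero with (α·β)^{p−1} ≠ 1. Let C = [[a,b],[c,d]] be a 2×2 matrix over K with c ≠ 0, let m, n ∈ K satisfy m^p = m and n^p = n, and write C' = [[a',b'],[c',d']] := C · A₀(m) · A₁(n); assume c' ≠ 0. Define γ := d·((d·β)^{p−1} − c^{p−1}) / (α·c^p·(1 − (α·β)^{p−1})) and γ' := d'·((d'·β)^{p−1} − (c')^{p−1}) / (α·(c')^p·(1 − (α·β)^{p−1})). Then γ' = (c/c')^{p+1}·(γ − m). -/

import Mathlib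

/-- Transformation rule for `γ` under right multiplication by
`A₀(m)·A₁(n) = !![1, m·α; 0, 1] * !![1, 0; n·β, 1]` with `m, n` in the prime subfield:
`γ' = (c/c')^(p+1)·(γ - m)`, where
`γ(M) = M₁₁·((M₁₁·β)^(p-1) - M₁₀^(p-1)) / (α·M₁₀^p·(1 - (α·β)^(p-1)))`. -/
theorem gamma_transformation (p : ℕ) [Fact p.Prime]
    (K : Type*) [Field K] [CharP K p] (α β : K) (hα : α ≠ 0) (hβ : β ≠ 0)
    (hab : (α * β) ^ (p - 1) ≠ 1)
    (C C' : Matrix (Fin 2) (Fin 2) K) (hc : C 1 0 ≠ 0)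
    (m n : K) (hm : m ^ p = m) (hn : n ^ p = n)
    (hC' : C' = C * !![1, m * α; 0, 1] * !![1, 0; n * β, 1])
    (hc' : C' 1 0 ≠ 0)
    (γ γ' : K)
    (hγ : γ = C 1 1 * ((C 1 1 * β) ^ (p - 1) - C 1 0 ^ (p - 1)) /
        (α * C 1 0 ^ p * (1 - (α * β) ^ (p - 1))))
    (hγ' : γ' = C' 1 1 * ((C' 1 1 * β) ^ (p - 1) - C' 1 0 ^ (p - 1)) /
        (α * C' 1 0 ^ p * (1 - (α * β) ^ (p - 1)))) :
    γ' = (C 1 0 / C' 1 0) ^ (p + 1) * (γ - m) := by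
  have he : C' 1 1 = C 1 1 + m * α * C 1 0 := by
    simp [hC', Matrix.mul_apply, Fin.sum_univ_two]; ring
  have hf : C' 1 0 = C 1 0 + n * β * (C 1 1 + m * α * C 1 0) := by
    simp [hC', Matrix.mul_apply, Fin.sum_univ_two]; ring
  set c := C 1 0 with hcdef
  set d := C 1 1 with hddef
  set e := d + m * α * c with hedef
  set f := C' 1 0 with hfdef
  have hΔ : (1 : K) - (α * β) ^ (p - 1) ≠ 0 := sub_ne_zero.mpr (Ne.symm hab)
  obtain ⟨q, hq⟩ : ∃ q, p = q + 1 :=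
    ⟨p - 1, (Nat.succ_pred_eq_of_pos (Fact.out : p.Prime).pos).symm⟩
  have hq1 : p - 1 = q := by omega
  have hep : e ^ p = d ^ p + m * α ^ p * c ^ p := by
    rw [hedef, add_pow_char, mul_pow, mul_pow, hm]
  have hfp : f ^ p = c ^ p + n * β ^ p * e ^ p := by
    rw [hf, add_pow_char, mul_pow, mul_pow, hn]
  rw [hγ', hγ, he]
  simp only [hq1, hq, Nat.add_sub_cancel] at hep hfp hΔ ⊢
  have hΔ' : (1 : K) - (β * α) ^ q ≠ 0 := by rwa [mul_comm β α]
  field_simp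
  have h1 : f ^ (q + 1) * (c / f) ^ (q + 1 + 1) = c ^ (q + 1 + 1) / f := by
    rw [div_pow, pow_succ f (q + 1)]
    field_simp
  rw [h1, div_mul_eq_mul_div, eq_div_iff hc']
  simp only [mul_pow]
  linear_combination c ^ (q + 1) *
    (e^(q+1)*β^q * hf - e * hfp + c*β^q * hep - c^(q+1) * hedef)
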